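/- Let k, d ≥ 1 and ε ≥ 0. Let w : F_2^k → F_2^d be any function (F_2 is the field with two elements). If, for independent uniformly random a, b ∈ F_2^k, Pr[w(a) + w(b) = w(a+b)] ≥ 1 − ε, then there exists a matrix A ∈ F_2^{d×k} such that the fraction of points b ∈ F_2^k with w(b) ≠ A·b is at most 6ε. -/

import Mathlib

open scoped Classical
open Finset

noncomputable def prob {Ω : Type*} [Fintype Ω] (P : Ω → Prop) : ℝ :=
  ((Finset.univ.filter P).card : ℝ) / (Fintype.card Ω : ℝ)

noncomputable def rdist {A B : Type*} [Fintype A] (f g : A → B) : ℝ :=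
  prob (fun a => f a ≠ g a)

lemma card_filter_prod {V W : Type*} [Fintype V] [Fintype W] (p : V → W → Prop) :
    #(univ.filter (fun x : V × W => p x.1 x.2))
      = ∑ a : V, #(univ.filter (fun b => p a b)) := by
  rw [Finset.card_filter, Fintype.sum_prod_type]
  refine Finset.sum_congr rfl fun a _ => ?_
  rw [Finset.card_filter]

lemma sum_fiber_card {V W : Type*} [Fintype V] [Fintype W] (f : V → W) :
    ∑ v : W, #(univ.filter (fun y => f y = v)) = Fintype.card V :=
  (Finset.card_eq_sum_card_fiberwise (fun x _ => mem_univ (f x))).symm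

lemma collision_count {V W : Type*} [Fintype V] [Fintype W] (f : V → W) :
    #(univ.filter (fun x : V × V => f x.1 = f x.2))
      = ∑ v : W, (#(univ.filter (fun y => f y = v)))^2 := by
  rw [card_filter_prod (fun a b : V => f a = f b)]
  have h1 : ∀ a : V, #(univ.filter (fun b => f a = f b))
      = #(univ.filter (fun y : V => f y = f a)) := by
    intro a; congr 1; ext b; simp [eq_comm]
  simp only [h1]
  have h2 : ∀ a : V, #(univ.filter (fun y : V => f y = f a))
      = ∑ v : W, if f a = v then #(univ.filter (fun y : V => f y = v)) else 0 := by
    intro a; simp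
  simp only [h2]
  rw [Finset.sum_comm]
  congr 1; ext v
  rw [← Finset.sum_filter]
  simp [sq]

lemma exists_majority {V W : Type*} [Fintype V] [Fintype W] (f : V → W)
    (h : 2 * (Fintype.card V)^2 < 3 * #(univ.filter (fun x : V × V => f x.1 = f x.2))) :
    ∃ v : W, 2 * Fintype.card V < 3 * #(univ.filter (fun y => f y = v)) := by
  by_contra hc
  push_neg at hc
  have : 3 * #(univ.filter (fun x : V × V => f x.1 = f x.2)) ≤ 2 * (Fintype.card V)^2 := by
    rw [collision_count, Finset.mul_sum]
    calc ∑ v : W, 3 * (#(univ.filter (fun y => f y = v)))^2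
        ≤ ∑ v : W, 2 * Fintype.card V * #(univ.filter (fun y => f y = v)) := by
          apply Finset.sum_le_sum
          intro v _
          have := hc v
          nlinarith [Nat.zero_le (#(univ.filter (fun y => f y = v)))]
      _ = 2 * (Fintype.card V)^2 := by
          rw [← Finset.mul_sum, sum_fiber_card]; ring
  omega

lemma shift_card {V : Type*} [Fintype V] [AddCommGroup V] (hself : ∀ a : V, a + a = 0)
    (p : V → Prop) (c : V) :
    #(univ.filter (fun y => p (c + y))) = #(univ.filter p) := by
  apply Finset.card_nbij' (fun y => c + y) (fun y => c + y)
  · intro a ha; simp only [Finset.mem_coe, mem_filter, mem_univ, true_and] at *; exact ha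
  · intro a ha; simp only [Finset.mem_coe, mem_filter, mem_univ, true_and] at *
    rwa [← add_assoc, hself, zero_add]
  · intro a _; simp [← add_assoc, hself]
  · intro a _; simp [← add_assoc, hself]

lemma prob_le_one {Ω : Type*} [Fintype Ω] (P : Ω → Prop) : prob P ≤ 1 := by
  unfold prob
  apply div_le_one_of_le₀
  · exact_mod_cast Finset.card_le_card (Finset.subset_univ _)
  · positivity

lemma prob_compl_le {Ω : Type*} [Fintype Ω] (P : Ω → Prop) {ε : ℝ}
    (h : prob P ≥ 1 - ε) :
    (#(univ.filter (fun x => ¬ P x)) : ℝ) ≤ ε * Fintype.card Ω := by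
  unfold prob at h
  have key : #(univ.filter P) + #(univ.filter (fun x => ¬ P x)) = Fintype.card Ω := by
    rw [Finset.card_filter_add_card_filter_not, Finset.card_univ]
  rcases Nat.eq_zero_or_pos (Fintype.card Ω) with h0 | h0
  · have h1 : #(univ.filter (fun x => ¬ P x)) = 0 := by omega
    have h2 : (1:ℝ) - ε ≤ 0 := by
      rw [h0] at h
      simpa using h
    rw [h1, h0]
    push_cast
    nlinarith
  · have hcR : (0:ℝ) < (Fintype.card Ω : ℝ) := by exact_mod_cast h0
    rw [ge_iff_le, le_div_iff₀ hcR] at h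
    have hkey : (#(univ.filter P) : ℝ) + (#(univ.filter (fun x => ¬ P x)) : ℝ)
        = (Fintype.card Ω : ℝ) := by exact_mod_cast key
    nlinarith

lemma blr_aux {V W : Type*} [Fintype V] [AddCommGroup V] [Fintype W] [AddCommGroup W]
    (hselfV : ∀ a : V, a + a = 0) (hselfW : ∀ a : W, a + a = 0)
    (w : V → W) {ε : ℝ} (hε : 0 ≤ ε) (htriv : 6 * ε < 1)
    (hbadR : (#(univ.filter (fun x : V × V => ¬(w x.1 + w x.2 = w (x.1 + x.2)))) : ℝ)
      ≤ ε * (Fintype.card V * Fintype.card V)) :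
    ∃ g : V → W, (∀ x1 x2 : V, g x1 + g x2 = g (x1 + x2)) ∧
      (#(univ.filter (fun x : V => w x ≠ g x)) : ℝ) ≤ 6 * ε * Fintype.card V := by
  set N := Fintype.card V with hNdef
  have hN0 : 0 < N := Fintype.card_pos
  have hN0R : (0:ℝ) < (N:ℝ) := by exact_mod_cast hN0
  set bad : Finset (V × V) :=
    univ.filter (fun x : V × V => ¬(w x.1 + w x.2 = w (x.1 + x.2))) with hbaddef
  set c : V → W → ℕ := fun x v => #(univ.filter (fun y => w (x + y) + w y = v)) with hcdef
  -- step A: collision bound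
  have hcoll : ∀ x : V, 2 * N^2 <
      3 * #(univ.filter (fun p : V × V =>
        (fun y => w (x + y) + w y) p.1 = (fun y => w (x + y) + w y) p.2)) := by
    intro x
    set Cx := #(univ.filter (fun p : V × V =>
        (fun y => w (x + y) + w y) p.1 = (fun y => w (x + y) + w y) p.2)) with hCx
    set compl := #(univ.filter (fun p : V × V =>
        ¬((fun y => w (x + y) + w y) p.1 = (fun y => w (x + y) + w y) p.2))) with hcompl
    have hsum : Cx + compl = N * N := by
      rw [hCx, hcompl, Finset.card_filter_add_card_filter_not, Finset.card_univ,
        Fintype.card_prod]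
    have hsubset : (univ.filter (fun p : V × V =>
        ¬((fun y => w (x + y) + w y) p.1 = (fun y => w (x + y) + w y) p.2))) ⊆
        (univ.filter (fun p : V × V => ¬(w (x + p.1) + w p.2 = w (x + p.1 + p.2)))) ∪
        (univ.filter (fun p : V × V => ¬(w (x + p.2) + w p.1 = w (x + p.2 + p.1)))) := by
      intro p hp
      simp only [mem_filter, mem_univ, true_and, Finset.mem_union] at hp ⊢
      by_contra hcon
      push_neg at hcon
      obtain ⟨e1, e2⟩ := hcon
      apply hp
      have harg : x + p.2 + p.1 = x + p.1 + p.2 := by abel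
      rw [harg] at e2
      show w (x + p.1) + w p.1 = w (x + p.2) + w p.2
      have cancel : ∀ a b cc : W, a + b = cc → a = cc + b := by
        intro a b cc hab; rw [← hab, add_assoc, hselfW, add_zero]
      rw [cancel _ _ _ e1, cancel _ _ _ e2]
      abel
    have hb1 : #(univ.filter (fun p : V × V =>
        ¬(w (x + p.1) + w p.2 = w (x + p.1 + p.2)))) = #bad := by
      apply Finset.card_nbij' (fun p => (x + p.1, p.2)) (fun q => (x + q.1, q.2))
      · intro p hp; simp only [hbaddef, Finset.mem_coe, mem_filter, mem_univ, true_and] at *; exact hp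
      · intro q hq; simp only [hbaddef, Finset.mem_coe, mem_filter, mem_univ, true_and] at *
        rwa [← add_assoc, hselfV, zero_add]
      · intro p _; ext <;> simp [← add_assoc, hselfV]
      · intro q _; ext <;> simp [← add_assoc, hselfV]
    have hb2 : #(univ.filter (fun p : V × V =>
        ¬(w (x + p.2) + w p.1 = w (x + p.2 + p.1)))) = #bad := by
      apply Finset.card_nbij' (fun p => (x + p.2, p.1)) (fun q => (q.2, x + q.1))
      · intro p hp; simp only [hbaddef, Finset.mem_coe, mem_filter, mem_univ, true_and] at *; exact hp
      · intro q hq; simp only [hbaddef, Finset.mem_coe, mem_filter, mem_univ, true_and] at *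
        rwa [← add_assoc, hselfV, zero_add]
      · intro p _; ext <;> simp [← add_assoc, hselfV]
      · intro q _; ext <;> simp [← add_assoc, hselfV]
    have hcompl_le : compl ≤ 2 * #bad := by
      calc compl ≤ #((univ.filter (fun p : V × V =>
            ¬(w (x + p.1) + w p.2 = w (x + p.1 + p.2)))) ∪
          (univ.filter (fun p : V × V =>
            ¬(w (x + p.2) + w p.1 = w (x + p.2 + p.1))))) :=
            Finset.card_le_card hsubset
        _ ≤ _ + _ := Finset.card_union_le _ _
        _ = 2 * #bad := by rw [hb1, hb2]; ring
    have hCxR : ((N:ℝ) * N) - 2 * (ε * (N * N)) ≤ (Cx : ℝ) := by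
      have h1 : (Cx : ℝ) + (compl : ℝ) = (N:ℝ) * N := by exact_mod_cast hsum
      have h2 : (compl : ℝ) ≤ 2 * (#bad : ℝ) := by exact_mod_cast hcompl_le
      nlinarith
    have : (2:ℝ) * (N:ℝ)^2 < 3 * (Cx:ℝ) := by nlinarith [mul_pos hN0R hN0R]
    exact_mod_cast this
  have hex : ∀ x : V, ∃ v : W, 2 * N < 3 * c x v := by
    intro x
    exact exists_majority (fun y => w (x + y) + w y) (hcoll x)
  set g : V → W := fun x => (hex x).choose with hgdef
  have hg : ∀ x : V, 2 * N < 3 * c x (g x) := fun x => (hex x).choose_spec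
  -- additivity
  have hadd : ∀ x1 x2 : V, g x1 + g x2 = g (x1 + x2) := by
    intro x1 x2
    set s1 := univ.filter (fun y : V => ¬(w (x1 + y) + w y = g x1)) with hs1
    set s2 := univ.filter (fun y : V => ¬(w (x2 + (x1 + y)) + w (x1 + y) = g x2)) with hs2
    set s3 := univ.filter (fun y : V => ¬(w (x1 + x2 + y) + w y = g (x1 + x2))) with hs3
    have h1 : 3 * #s1 < N := by
      have := hg x1
      have hco : c x1 (g x1) + #s1 = N := by
        rw [hcdef, hs1, Finset.card_filter_add_card_filter_not, Finset.card_univ]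
      omega
    have h2 : 3 * #s2 < N := by
      have := hg x2
      have hshift : #s2 = #(univ.filter (fun y : V => ¬(w (x2 + y) + w y = g x2))) := by
        rw [hs2]
        have hs := shift_card hselfV (fun y => ¬(w (x2 + y) + w y = g x2)) x1
        convert hs using 2 <;> congr!
      have hco : c x2 (g x2)
          + #(univ.filter (fun y : V => ¬(w (x2 + y) + w y = g x2))) = N := by
        rw [hcdef, Finset.card_filter_add_card_filter_not, Finset.card_univ]
      omega
    have h3 : 3 * #s3 < N := by
      have := hg (x1 + x2)
      have hco : c (x1 + x2) (g (x1 + x2)) + #s3 = N := by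
        rw [hcdef, hs3, Finset.card_filter_add_card_filter_not, Finset.card_univ]
      omega
    have hunion : #(s1 ∪ s2 ∪ s3) < N := by
      calc #(s1 ∪ s2 ∪ s3) ≤ #(s1 ∪ s2) + #s3 := Finset.card_union_le _ _
        _ ≤ #s1 + #s2 + #s3 := by
            have := Finset.card_union_le s1 s2; omega
        _ < N := by omega
    have hy : ∃ y : V, y ∉ s1 ∪ s2 ∪ s3 := by
      by_contra hcon
      push_neg at hcon
      have : (s1 ∪ s2 ∪ s3) = univ := Finset.eq_univ_iff_forall.mpr hcon
      rw [this, Finset.card_univ] at hunion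
      omega
    obtain ⟨y, hy⟩ := hy
    simp only [Finset.mem_union, hs1, hs2, hs3, mem_filter, mem_univ, true_and,
      not_or, not_not] at hy
    obtain ⟨⟨e1, e2⟩, e3⟩ := hy
    have harg : x2 + (x1 + y) = x1 + x2 + y := by abel
    rw [harg] at e2
    rw [← e1, ← e2, ← e3]
    calc (w (x1 + y) + w y) + (w (x1 + x2 + y) + w (x1 + y))
        = (w (x1 + y) + w (x1 + y)) + (w (x1 + x2 + y) + w y) := by abel
      _ = w (x1 + x2 + y) + w y := by rw [hselfW, zero_add]
  refine ⟨g, hadd, ?_⟩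
  -- distance bound
  set D := univ.filter (fun x : V => w x ≠ g x) with hD
  have hfiber : #bad = ∑ x : V, #(univ.filter (fun y => ¬(w x + w y = w (x + y)))) := by
    rw [hbaddef]
    have hf := card_filter_prod (fun a b : V => ¬(w a + w b = w (a + b)))
    convert hf using 2 <;> congr!
  have hperx : ∀ x ∈ D, 2 * N < 3 * #(univ.filter (fun y => ¬(w x + w y = w (x + y)))) := by
    intro x hx
    rw [hD, mem_filter] at hx
    have hne : w x ≠ g x := hx.2
    have hpred : (univ.filter (fun y : V => w x + w y = w (x + y)))
        = (univ.filter (fun y : V => w (x + y) + w y = w x)) := by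
      ext y
      simp only [mem_filter, mem_univ, true_and]
      constructor <;> intro e
      · rw [← e, add_assoc, hselfW, add_zero]
      · rw [← e, add_assoc, hselfW, add_zero]
    have hco : #(univ.filter (fun y : V => w x + w y = w (x + y)))
        + #(univ.filter (fun y : V => ¬(w x + w y = w (x + y)))) = N := by
      rw [Finset.card_filter_add_card_filter_not, Finset.card_univ]
    have hdisj : Disjoint (univ.filter (fun y : V => w (x + y) + w y = w x))
        (univ.filter (fun y : V => w (x + y) + w y = g x)) := by
      rw [Finset.disjoint_left]
      intro a ha hb
      simp only [mem_filter, mem_univ, true_and] at ha hb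
      exact hne (ha ▸ hb ▸ rfl)
    have hle : #(univ.filter (fun y : V => w (x + y) + w y = w x)) + c x (g x) ≤ N := by
      calc #(univ.filter (fun y : V => w (x + y) + w y = w x)) + c x (g x)
          = #((univ.filter (fun y : V => w (x + y) + w y = w x))
            ∪ (univ.filter (fun y : V => w (x + y) + w y = g x))) :=
            (Finset.card_union_of_disjoint hdisj).symm
        _ ≤ #(univ : Finset V) := Finset.card_le_card (Finset.subset_univ _)
        _ = N := Finset.card_univ
    have hgx := hg x
    rw [hpred] at hco
    omega
  have hDbound : 2 * N * #D ≤ 3 * #bad := by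
    calc 2 * N * #D = ∑ _x ∈ D, 2 * N := by rw [Finset.sum_const, smul_eq_mul]; ring
      _ ≤ ∑ x ∈ D, 3 * #(univ.filter (fun y => ¬(w x + w y = w (x + y)))) :=
          Finset.sum_le_sum (fun x hx => le_of_lt (hperx x hx))
      _ = 3 * ∑ x ∈ D, #(univ.filter (fun y => ¬(w x + w y = w (x + y)))) := by
          rw [Finset.mul_sum]
      _ ≤ 3 * ∑ x : V, #(univ.filter (fun y => ¬(w x + w y = w (x + y)))) := by
          apply Nat.mul_le_mul_left
          exact Finset.sum_le_sum_of_subset (Finset.subset_univ D)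
      _ = 3 * #bad := by rw [hfiber]
  have hcast : 2 * (N:ℝ) * (#D:ℝ) ≤ 3 * (#bad:ℝ) := by exact_mod_cast hDbound
  nlinarith

theorem blr_soundness_F2 {k d : ℕ} (hk : 1 ≤ k) (hd : 1 ≤ d) {ε : ℝ} (hε : 0 ≤ ε)
    (w : (Fin k → ZMod 2) → (Fin d → ZMod 2))
    (h : prob (fun x : (Fin k → ZMod 2) × (Fin k → ZMod 2) =>
        w x.1 + w x.2 = w (x.1 + x.2)) ≥ 1 - ε) :
    ∃ A : Matrix (Fin d) (Fin k) (ZMod 2),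
      rdist w (fun b => A.mulVec b) ≤ 6 * ε := by
  by_cases htriv : 1 ≤ 6 * ε
  · refine ⟨0, ?_⟩
    unfold rdist
    exact le_trans (prob_le_one _) htriv
  push_neg at htriv
  have hselfV : ∀ a : Fin k → ZMod 2, a + a = 0 :=
    fun a => funext fun i => CharTwo.add_self_eq_zero _
  have hselfW : ∀ a : Fin d → ZMod 2, a + a = 0 :=
    fun a => funext fun i => CharTwo.add_self_eq_zero _
  set N := Fintype.card (Fin k → ZMod 2) with hNdef
  have hN0 : 0 < N := Fintype.card_pos
  have hN0R : (0:ℝ) < (N:ℝ) := by exact_mod_cast hN0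
  have hbadR := prob_compl_le _ h
  rw [Fintype.card_prod] at hbadR
  obtain ⟨g, hadd, hdist⟩ := blr_aux hselfV hselfW w hε htriv (by
    push_cast at hbadR ⊢
    convert hbadR using 3 <;> congr!)
  have g0 : g 0 = 0 := by
    have := hadd 0 0
    rw [add_zero] at this
    exact add_left_cancel (this.trans (add_zero (g 0)).symm)
  have hsmul : ∀ (m : ZMod 2) (x : Fin k → ZMod 2), g (m • x) = m • g x := by
    intro m x
    have hm : m = 0 ∨ m = 1 := by
      have : ∀ m' : ZMod 2, m' = 0 ∨ m' = 1 := by decide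
      exact this m
    rcases hm with rfl | rfl
    · simp [g0]
    · simp
  set L : (Fin k → ZMod 2) →ₗ[ZMod 2] (Fin d → ZMod 2) :=
    { toFun := g, map_add' := fun a b => (hadd a b).symm, map_smul' := hsmul } with hLdef
  refine ⟨LinearMap.toMatrix' L, ?_⟩
  have hApply : ∀ b : Fin k → ZMod 2, (LinearMap.toMatrix' L).mulVec b = g b := by
    intro b
    rw [← Matrix.toLin'_apply, Matrix.toLin'_toMatrix']
    rfl
  unfold rdist prob
  rw [div_le_iff₀ hN0R]
  convert hdist using 3
  ext x
  simp [hApply]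
  ext x
  simp [hApply]
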